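/- Let σ be a real symmetric traceless n×n matrix (n ≥ 2). Then trace(σ⁴) ≤ (((n-1)³ + 1)/(n²(n-1))) · (trace(σ²))². -/
import Mathlib

open Finset

lemma pair_bound (n : ℕ) (hn : 2 ≤ n) (x : Fin n → ℝ) (h1 : ∑ i, x i = 0)
    (i j : Fin n) :
    (x i ^ 2 - x j ^ 2) ^ 2
      ≤ ((n : ℝ) - 2) * ((x i - x j) ^ 2 * ((∑ k, x k ^ 2) - x i ^ 2 - x j ^ 2)) := by
  rcases eq_or_ne i j with rfl | hij
  · simp
  · have hT : ((Finset.univ : Finset (Fin n)) \ {i, j}).card = n - 2 := by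
      rw [Finset.card_sdiff_of_subset (by simp), Finset.card_univ, Fintype.card_fin,
        Finset.card_insert_of_notMem (by simpa using hij), Finset.card_singleton]
    have hsplit : x i + x j + ∑ k ∈ Finset.univ \ {i, j}, x k = 0 := by
      rw [← h1, ← Finset.sum_sdiff (Finset.subset_univ {i, j}),
        Finset.sum_insert (by simpa using hij), Finset.sum_singleton]
      ring
    have hs2 : ∑ k ∈ Finset.univ \ {i, j}, x k ^ 2
        = (∑ k, x k ^ 2) - x i ^ 2 - x j ^ 2 := by
      have := Finset.sum_sdiff (f := fun k => x k ^ 2) (Finset.subset_univ {i, j})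
      rw [Finset.sum_insert (by simpa using hij), Finset.sum_singleton] at this
      linarith
    have hCS : (∑ k ∈ Finset.univ \ {i, j}, x k) ^ 2
        ≤ ((n : ℝ) - 2) * ∑ k ∈ Finset.univ \ {i, j}, x k ^ 2 := by
      have h := sq_sum_le_card_mul_sum_sq (s := Finset.univ \ {i, j}) (f := x)
      rw [hT] at h
      calc (∑ k ∈ Finset.univ \ {i, j}, x k) ^ 2
          ≤ ((n - 2 : ℕ) : ℝ) * ∑ k ∈ Finset.univ \ {i, j}, x k ^ 2 := by exact_mod_cast h
        _ = ((n : ℝ) - 2) * ∑ k ∈ Finset.univ \ {i, j}, x k ^ 2 := by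
            rw [Nat.cast_sub hn]; norm_num
    have hsum : (x i + x j) ^ 2 ≤ ((n : ℝ) - 2) * ((∑ k, x k ^ 2) - x i ^ 2 - x j ^ 2) := by
      have he : x i + x j = -∑ k ∈ Finset.univ \ {i, j}, x k := by linarith [hsplit]
      rw [he, neg_sq, ← hs2]; exact hCS
    have hfac : (x i ^ 2 - x j ^ 2) ^ 2 = (x i - x j) ^ 2 * (x i + x j) ^ 2 := by ring
    rw [hfac]
    calc (x i - x j) ^ 2 * (x i + x j) ^ 2
        ≤ (x i - x j) ^ 2 * (((n : ℝ) - 2) * ((∑ k, x k ^ 2) - x i ^ 2 - x j ^ 2)) :=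
          mul_le_mul_of_nonneg_left hsum (sq_nonneg _)
      _ = ((n : ℝ) - 2) * ((x i - x j) ^ 2 * ((∑ k, x k ^ 2) - x i ^ 2 - x j ^ 2)) := by ring

lemma sum_pow_four_le (n : ℕ) (hn : 2 ≤ n) (x : Fin n → ℝ) (h1 : ∑ i, x i = 0) :
    ∑ i, x i ^ 4 ≤ (((n : ℝ) - 1) ^ 3 + 1) / ((n : ℝ) ^ 2 * ((n : ℝ) - 1)) * (∑ i, x i ^ 2) ^ 2 := by
  have hn' : (2 : ℝ) ≤ (n : ℝ) := by exact_mod_cast hn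
  set s := ∑ i, x i ^ 2 with hs
  set p4 := ∑ i, x i ^ 4 with hp4
  set p3 := ∑ i, x i ^ 3 with hp3
  have hL : ∑ i, ∑ j, (x i ^ 2 - x j ^ 2) ^ 2 = 2 * (n : ℝ) * p4 - 2 * s ^ 2 := by
    have h : ∀ i : Fin n, ∑ j, (x i ^ 2 - x j ^ 2) ^ 2
        = (n : ℝ) * x i ^ 4 - 2 * x i ^ 2 * s + p4 := by
      intro i
      have h2 : ∀ j : Fin n, (x i ^ 2 - x j ^ 2) ^ 2
          = x i ^ 4 - 2 * x i ^ 2 * x j ^ 2 + x j ^ 4 := fun j => by ring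
      simp only [h2, Finset.sum_add_distrib, Finset.sum_sub_distrib, ← Finset.mul_sum,
        Finset.sum_const, Finset.card_univ, Fintype.card_fin, nsmul_eq_mul, ← hs, ← hp4]
    rw [Finset.sum_congr rfl (fun i _ => h i)]
    simp only [Finset.sum_add_distrib, Finset.sum_sub_distrib, ← Finset.mul_sum,
      Finset.sum_const, Finset.card_univ, Fintype.card_fin, nsmul_eq_mul, ← hs, ← hp4]
    rw [Finset.sum_congr rfl (fun i _ => show 2 * x i ^ 2 * s = (2 * s) * x i ^ 2 from by ring),
      ← Finset.mul_sum, ← hs]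
    ring
  have hR : ∑ i, ∑ j, (x i - x j) ^ 2 * (s - x i ^ 2 - x j ^ 2)
      = 2 * (n : ℝ) * s ^ 2 - 2 * s ^ 2 - 2 * (n : ℝ) * p4 := by
    have h : ∀ i : Fin n, ∑ j, (x i - x j) ^ 2 * (s - x i ^ 2 - x j ^ 2)
        = (n : ℝ) * (s * x i ^ 2) + s * s - (n : ℝ) * x i ^ 4 - (2 * x i ^ 2) * s - p4
          + (2 * x i) * p3 := by
      intro i
      have h2 : ∀ j : Fin n, (x i - x j) ^ 2 * (s - x i ^ 2 - x j ^ 2)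
          = s * x i ^ 2 + s * x j ^ 2 - (2 * s * x i) * x j - x i ^ 4
            - (2 * x i ^ 2) * x j ^ 2 - x j ^ 4 + (2 * x i ^ 3) * x j + (2 * x i) * x j ^ 3 :=
        fun j => by ring
      simp only [h2, Finset.sum_add_distrib, Finset.sum_sub_distrib, ← Finset.mul_sum,
        Finset.sum_const, Finset.card_univ, Fintype.card_fin, nsmul_eq_mul, ← hs, ← hp4,
        ← hp3, h1, mul_zero]
      ring
    rw [Finset.sum_congr rfl (fun i _ => h i)]
    simp only [Finset.sum_add_distrib, Finset.sum_sub_distrib, ← Finset.mul_sum,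
      Finset.sum_const, Finset.card_univ, Fintype.card_fin, nsmul_eq_mul, ← hs, ← hp4, ← hp3]
    rw [Finset.sum_congr rfl (fun i _ => show 2 * x i ^ 2 * s = (2 * s) * x i ^ 2 from by ring),
      ← Finset.mul_sum, ← hs]
    rw [Finset.sum_congr rfl (fun i _ => show 2 * x i * p3 = (2 * p3) * x i from by ring),
      ← Finset.mul_sum, h1]
    ring
  have hkey : 2 * (n : ℝ) * p4 - 2 * s ^ 2
      ≤ ((n : ℝ) - 2) * (2 * (n : ℝ) * s ^ 2 - 2 * s ^ 2 - 2 * (n : ℝ) * p4) := by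
    rw [← hL, ← hR, Finset.mul_sum]
    refine Finset.sum_le_sum fun i _ => ?_
    rw [Finset.mul_sum]
    exact Finset.sum_le_sum fun j _ => pair_bound n hn x h1 i j
  have hpos : (0 : ℝ) < (n : ℝ) ^ 2 * ((n : ℝ) - 1) := by nlinarith
  rw [div_mul_eq_mul_div, le_div_iff₀ hpos]
  have hmul := mul_le_mul_of_nonneg_left hkey (by linarith : (0 : ℝ) ≤ (n : ℝ))
  nlinarith [hmul]

theorem trace_fourth_le_of_traceless (n : ℕ) (hn : 2 ≤ n)
    (σ : Matrix (Fin n) (Fin n) ℝ) (hσ : σ.IsSymm) (htr : σ.trace = 0) :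
    (σ * σ * σ * σ).trace ≤
      (((n : ℝ) - 1) ^ 3 + 1) / ((n : ℝ) ^ 2 * ((n : ℝ) - 1)) * ((σ * σ).trace) ^ 2 := by
  have hH : σ.IsHermitian := by
    rw [Matrix.IsHermitian, Matrix.conjTranspose_eq_transpose_of_trivial]; exact hσ
  set U : Matrix (Fin n) (Fin n) ℝ := (Matrix.IsHermitian.eigenvectorUnitary hH : Matrix (Fin n) (Fin n) ℝ) with hU
  set y : Fin n → ℝ := RCLike.ofReal ∘ hH.eigenvalues with hy
  have hVU : star U * U = 1 := (Matrix.IsHermitian.eigenvectorUnitary hH).2.1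
  have hUV : U * star U = 1 := (Matrix.IsHermitian.eigenvectorUnitary hH).2.2
  have hspec : σ = U * Matrix.diagonal y * star U := hH.spectral_theorem
  have conj_mul : ∀ A B : Matrix (Fin n) (Fin n) ℝ,
      (U * A * star U) * (U * B * star U) = U * (A * B) * star U := by
    intro A B
    calc (U * A * star U) * (U * B * star U)
        = U * (A * ((star U * U) * (B * star U))) := by simp only [Matrix.mul_assoc]
      _ = U * (A * B) * star U := by rw [hVU, Matrix.one_mul]; simp only [Matrix.mul_assoc]
  have trace_conj : ∀ A : Matrix (Fin n) (Fin n) ℝ, (U * A * star U).trace = A.trace := by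
    intro A
    rw [Matrix.trace_mul_cycle, hVU, Matrix.one_mul]
  have h2 : σ * σ = U * (Matrix.diagonal (fun i => y i * y i)) * star U := by
    rw [hspec, conj_mul, Matrix.diagonal_mul_diagonal]
  have h4 : σ * σ * σ * σ = U * (Matrix.diagonal (fun i => y i * y i * (y i * y i))) * star U := by
    rw [show σ * σ * σ * σ = (σ * σ) * (σ * σ) from by simp only [Matrix.mul_assoc], h2, conj_mul, Matrix.diagonal_mul_diagonal]
  have htr1 : ∑ i, y i = 0 := by
    have h := trace_conj (Matrix.diagonal y)
    rw [← hspec] at h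
    rw [← Matrix.trace_diagonal (d := y), ← h]; exact htr
  have htr2 : (σ * σ).trace = ∑ i, y i ^ 2 := by
    rw [h2, trace_conj, Matrix.trace_diagonal]
    exact Finset.sum_congr rfl fun i _ => by ring
  have htr4 : (σ * σ * σ * σ).trace = ∑ i, y i ^ 4 := by
    rw [h4, trace_conj, Matrix.trace_diagonal]
    exact Finset.sum_congr rfl fun i _ => by ring
  rw [htr2, htr4]
  exact sum_pow_four_le n hn y htr1
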